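/- arXiv:2504.03560 — 3 statements merged into one kernel-verified Lean document; each statement's English description precedes it below -/
import Mathlib

section
/- Let A be a real p×s matrix, and let P = I - Aᵀ(AAᵀ)†A be the orthogonal projector onto the null space of A, where † denotes the Moore–Penrose pseudoinverse. Let H be a symmetric positive definite s×s matrix and let Q = P H P. Then Q Q† = P and Q† Q = P. -/
open Matrix

/-- `Md` is the Moore–Penrose pseudoinverse of `M` (characterized by the four
Penrose conditions, which determine it uniquely). -/
def IsMoorePenroseInv {n : Type*} [Fintype n] (M Md : Matrix n n ℝ) : Prop :=
  M * Md * M = M ∧ Md * M * Md = Md ∧ (M * Md)ᵀ = M * Md ∧ (Md * M)ᵀ = Md * M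

/-- Uniqueness of the Moore–Penrose inverse. -/
lemma mp_unique {n : Type*} [Fintype n] (M X Y : Matrix n n ℝ)
    (hX : IsMoorePenroseInv M X) (hY : IsMoorePenroseInv M Y) : X = Y := by
  obtain ⟨hX1, hX2, hX3, hX4⟩ := hX
  obtain ⟨hY1, hY2, hY3, hY4⟩ := hY
  have hMX : M * X = M * Y := by
    calc M * X = (M * Y * M) * X := by rw [hY1]
    _ = (M * Y) * (M * X) := by rw [Matrix.mul_assoc]
    _ = (M * Y)ᵀ * (M * X)ᵀ := by rw [hY3, hX3]
    _ = Yᵀ * (M * X * M)ᵀ := by simp only [Matrix.transpose_mul, Matrix.mul_assoc]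
    _ = Yᵀ * Mᵀ := by rw [hX1]
    _ = (M * Y)ᵀ := (Matrix.transpose_mul M Y).symm
    _ = M * Y := hY3
  have hXM : X * M = Y * M := by
    calc X * M = X * (M * Y * M) := by rw [hY1]
    _ = (X * M) * (Y * M) := by simp only [Matrix.mul_assoc]
    _ = (X * M)ᵀ * (Y * M)ᵀ := by rw [hX4, hY4]
    _ = (M * X * M)ᵀ * Yᵀ := by simp only [Matrix.transpose_mul, Matrix.mul_assoc]
    _ = Mᵀ * Yᵀ := by rw [hX1]
    _ = (Y * M)ᵀ := (Matrix.transpose_mul Y M).symm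
    _ = Y * M := hY4
  calc X = X * M * X := hX2.symm
  _ = X * (M * Y) := by rw [Matrix.mul_assoc, hMX]
  _ = Y * M * Y := by rw [← Matrix.mul_assoc, hXM]
  _ = Y := hY2

/-- If `Z ≠ 0` and `H` is positive definite then `Zᵀ H Z ≠ 0`. -/
lemma pd_cancel {s : ℕ} (H : Matrix (Fin s) (Fin s) ℝ) (hHpd : H.PosDef)
    (Z : Matrix (Fin s) (Fin s) ℝ) (h : Zᵀ * H * Z = 0) : Z = 0 := by
  ext i j
  by_contra hij
  have hz : (fun k => Z k j) ≠ 0 := by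
    intro h0
    exact hij (by simpa using congrFun h0 i)
  have hpos := hHpd.dotProduct_mulVec_pos (x := fun k => Z k j) hz
  have hzero : (Zᵀ * H * Z) j j = dotProduct (star (fun k => Z k j)) (H *ᵥ (fun k => Z k j)) := by
    simp only [Matrix.mul_apply, Matrix.mulVec, dotProduct, Matrix.transpose_apply,
      Finset.sum_mul, Finset.mul_sum, star_trivial]
    rw [Finset.sum_comm]
    exact Finset.sum_congr rfl fun a _ => Finset.sum_congr rfl fun b _ => by ring
  rw [h] at hzero
  simp only [Matrix.zero_apply] at hzero
  rw [← hzero] at hpos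
  exact lt_irrefl 0 hpos

theorem stmt0 (p s : ℕ) (A : Matrix (Fin p) (Fin s) ℝ)
    (Bd : Matrix (Fin p) (Fin p) ℝ) (hBd : IsMoorePenroseInv (A * Aᵀ) Bd)
    (P : Matrix (Fin s) (Fin s) ℝ) (hP : P = 1 - Aᵀ * Bd * A)
    (H : Matrix (Fin s) (Fin s) ℝ) (hHsymm : Hᵀ = H) (hHpd : H.PosDef)
    (Q : Matrix (Fin s) (Fin s) ℝ) (hQ : Q = P * H * P)
    (Qd : Matrix (Fin s) (Fin s) ℝ) (hQd : IsMoorePenroseInv Q Qd) :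
    Q * Qd = P ∧ Qd * Q = P := by
  set M := A * Aᵀ with hM
  have hMsymm : Mᵀ = M := by rw [hM, Matrix.transpose_mul, Matrix.transpose_transpose]
  obtain ⟨hB1, hB2, hB3, hB4⟩ := hBd
  -- Bdᵀ is also a MP inverse of M, hence Bd is symmetric
  have hBdT : IsMoorePenroseInv M Bdᵀ := by
    refine ⟨?_, ?_, ?_, ?_⟩
    · calc M * Bdᵀ * M = (Mᵀ * Bd * Mᵀ)ᵀ := by
            simp [Matrix.transpose_mul, Matrix.mul_assoc]
      _ = M := by rw [hMsymm, hB1, hMsymm]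
    · calc Bdᵀ * M * Bdᵀ = (Bd * Mᵀ * Bd)ᵀ := by
            simp [Matrix.transpose_mul, Matrix.mul_assoc]
      _ = Bdᵀ := by rw [hMsymm, hB2]
    · calc (M * Bdᵀ)ᵀ = Bd * Mᵀ := by rw [Matrix.transpose_mul, Matrix.transpose_transpose]
      _ = Bd * M := by rw [hMsymm]
      _ = (Bd * M)ᵀ := hB4.symm
      _ = Mᵀ * Bdᵀ := by rw [Matrix.transpose_mul]
      _ = M * Bdᵀ := by rw [hMsymm]
    · calc (Bdᵀ * M)ᵀ = Mᵀ * Bd := by rw [Matrix.transpose_mul, Matrix.transpose_transpose]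
      _ = M * Bd := by rw [hMsymm]
      _ = (M * Bd)ᵀ := hB3.symm
      _ = Bdᵀ * Mᵀ := by rw [Matrix.transpose_mul]
      _ = Bdᵀ * M := by rw [hMsymm]
  have hBdsymm : Bdᵀ = Bd := mp_unique M Bdᵀ Bd hBdT ⟨hB1, hB2, hB3, hB4⟩
  -- P is symmetric
  have hPsymm : Pᵀ = P := by
    rw [hP]
    simp [Matrix.transpose_sub, Matrix.transpose_mul, hBdsymm, Matrix.mul_assoc]
  -- P is idempotent
  have hPidem : P * P = P := by
    rw [hP]
    have key : Aᵀ * Bd * A * (Aᵀ * Bd * A) = Aᵀ * Bd * A := by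
      calc Aᵀ * Bd * A * (Aᵀ * Bd * A) = Aᵀ * (Bd * (A * Aᵀ) * Bd) * A := by
            simp only [Matrix.mul_assoc]
      _ = Aᵀ * Bd * A := by rw [← hM, hB2]
    rw [Matrix.sub_mul, Matrix.mul_sub, Matrix.mul_sub]
    simp only [Matrix.one_mul, Matrix.mul_one]
    rw [key]
    abel
  have hQsymm : Qᵀ = Q := by
    rw [hQ]; simp [Matrix.transpose_mul, hPsymm, hHsymm, Matrix.mul_assoc]
  have hPQ : P * Q = Q := by
    rw [hQ, ← Matrix.mul_assoc, ← Matrix.mul_assoc, hPidem]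
  have hQP : Q * P = Q := by
    rw [hQ, Matrix.mul_assoc, Matrix.mul_assoc, hPidem, ← Matrix.mul_assoc]
  -- kernel lemma: Q * X = 0 → P * X = 0
  have hker : ∀ X : Matrix (Fin s) (Fin s) ℝ, Q * X = 0 → P * X = 0 := by
    intro X hX
    apply pd_cancel H hHpd
    have : (P * X)ᵀ * H * (P * X) = Xᵀ * (Q * X) := by
      rw [hQ]
      simp only [Matrix.transpose_mul, hPsymm, Matrix.mul_assoc]
    rw [this, hX, Matrix.mul_zero]
  obtain ⟨hQ1, hQ2, hQ3, hQ4⟩ := hQd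
  -- R := Qd * Q equals P
  have hR : Qd * Q = P := by
    have h0 : Q * (1 - Qd * Q) = 0 := by
      rw [Matrix.mul_sub, Matrix.mul_one, ← Matrix.mul_assoc, hQ1, sub_self]
    have h1 : P * (1 - Qd * Q) = 0 := hker _ h0
    have h2 : P * (Qd * Q) = P := by
      rw [Matrix.mul_sub, Matrix.mul_one, sub_eq_zero] at h1
      exact h1.symm
    have h3 : (Qd * Q) * P = P := by
      have h2' := congrArg Matrix.transpose h2
      rwa [Matrix.transpose_mul, hQ4, hPsymm] at h2'
    calc Qd * Q = Qd * (Q * P) := by rw [hQP]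
    _ = (Qd * Q) * P := by rw [Matrix.mul_assoc]
    _ = P := h3
  have hS : Q * Qd = P := by
    have h0 : Q * (Q * Qd - P)ᵀ = 0 := by
      have : (Q * Qd - P) * Q = 0 := by
        rw [Matrix.sub_mul, hQ1, hPQ, sub_self]
      calc Q * (Q * Qd - P)ᵀ = Qᵀ * (Q * Qd - P)ᵀ := by rw [hQsymm]
      _ = ((Q * Qd - P) * Q)ᵀ := by rw [Matrix.transpose_mul]
      _ = 0 := by rw [this, Matrix.transpose_zero]
    have h1 : P * (Q * Qd - P)ᵀ = 0 := hker _ h0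
    have h2 : (Q * Qd - P) * P = 0 := by
      have := congrArg Matrix.transpose h1
      rwa [Matrix.transpose_mul, Matrix.transpose_transpose, hPsymm, Matrix.transpose_zero]
        at this
    have h3 : Q * Qd * P = P := by
      rw [Matrix.sub_mul, sub_eq_zero] at h2
      rw [h2, hPidem]
    have h4 : P * (Q * Qd) = Q * Qd := by
      rw [← Matrix.mul_assoc, hPQ]
    have h5 : P * (Q * Qd) = P := by
      have h3' := congrArg Matrix.transpose h3
      rwa [Matrix.transpose_mul, hQ3, hPsymm] at h3'
    exact h4.symm.trans h5
  exact ⟨hS, hR⟩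
end

section
/- Let (R_n), (A_n), (B_n), (C_n) be sequences of nonnegative random variables adapted to a filtration (ℱ_n) satisfying E[R_{n+1} | ℱ_n] ≤ (1 + A_n) R_n + B_n - C_n for all n. Then on the event {Σ_n A_n < ∞ and Σ_n B_n < ∞}, R_n converges almost surely to a finite random variable R_∞, and Σ_n C_n < ∞ almost surely. -/
open MeasureTheory Filter

/-- Robbins–Siegmund almost-supermartingale convergence theorem. -/
theorem stmt9 {Ω : Type*} {m : MeasurableSpace Ω} (μ : Measure Ω) [IsProbabilityMeasure μ]
    (ℱ : Filtration ℕ m)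
    (R A B C : ℕ → Ω → ℝ)
    (hRnn : ∀ n ω, 0 ≤ R n ω) (hAnn : ∀ n ω, 0 ≤ A n ω)
    (hBnn : ∀ n ω, 0 ≤ B n ω) (hCnn : ∀ n ω, 0 ≤ C n ω)
    (hRad : Adapted ℱ R) (hAad : Adapted ℱ A) (hBad : Adapted ℱ B) (hCad : Adapted ℱ C)
    (hRint : ∀ n, Integrable (R n) μ) (hAint : ∀ n, Integrable (A n) μ)
    (hBint : ∀ n, Integrable (B n) μ) (hCint : ∀ n, Integrable (C n) μ)
    (hstep : ∀ n, μ[R (n + 1) | ℱ n] ≤ᵐ[μ]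
      fun ω => (1 + A n ω) * R n ω + B n ω - C n ω) :
    ∀ᵐ ω ∂μ, (Summable (fun n => A n ω) ∧ Summable (fun n => B n ω)) →
      ((∃ L : ℝ, Tendsto (fun n => R n ω) atTop (nhds L)) ∧
        Summable (fun n => C n ω)) := by
  -- the compounded growth factor
  set P : ℕ → Ω → ℝ := fun n ω => ∏ k ∈ Finset.range n, (1 + A k ω) with hPdef
  have hP1 : ∀ n ω, 1 ≤ P n ω := by
    intro n ω
    simp only [hPdef]
    induction n with
    | zero => simp
    | succ n ih =>
      rw [Finset.prod_range_succ]
      nlinarith [hAnn n ω]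
  have hP0 : ∀ n ω, 0 < P n ω := fun n ω => lt_of_lt_of_le one_pos (hP1 n ω)
  have hPsucc : ∀ n ω, P (n+1) ω = P n ω * (1 + A n ω) := by
    intro n ω; simp [hPdef, Finset.prod_range_succ]
  have hPmono : ∀ ω, Monotone fun n => P n ω := by
    intro ω
    refine monotone_nat_of_le_succ fun n => ?_
    rw [hPsucc]
    nlinarith [hP0 n ω, hAnn n ω]
  -- measurability: P (n+1) is ℱ n measurable
  have hPmeas : ∀ n k, k ≤ n + 1 → Measurable[ℱ n] (P k) := by
    intro n k hk
    refine Finset.measurable_prod _ fun i hi => ?_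
    have hin : i ≤ n := by
      have := Finset.mem_range.1 hi; omega
    exact measurable_const.add ((hAad i).mono (ℱ.mono hin) le_rfl)
  -- the compensated process Z
  set D : ℕ → Ω → ℝ := fun k ω => (C k ω - B k ω) / P (k+1) ω with hDdef
  set Z : ℕ → Ω → ℝ := fun n ω => R n ω / P n ω + ∑ k ∈ Finset.range n, D k ω with hZdef
  -- measurability in m of P
  have hPm : ∀ n, Measurable (P n) := by
    intro n
    exact Finset.measurable_prod _ fun i _ =>
      measurable_const.add ((hAad i).mono (ℱ.le i) le_rfl)
  have hRPint : ∀ n, Integrable (fun ω => R n ω / P n ω) μ := by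
    intro n
    refine Integrable.mono' (hRint n) ?_ ?_
    · exact (((hRad n).mono (ℱ.le n) le_rfl).div (hPm n)).aestronglyMeasurable
    · refine Eventually.of_forall fun ω => ?_
      rw [Real.norm_eq_abs, abs_of_nonneg (div_nonneg (hRnn n ω) (hP0 n ω).le)]
      exact div_le_self (hRnn n ω) (hP1 n ω)
  have hDm : ∀ k, Measurable (D k) := by
    intro k
    exact (((hCad k).mono (ℱ.le k) le_rfl).sub
      ((hBad k).mono (ℱ.le k) le_rfl)).div (hPm (k+1))
  have hDint : ∀ k, Integrable (D k) μ := by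
    intro k
    refine Integrable.mono' ((hCint k).add (hBint k)) (hDm k).aestronglyMeasurable ?_
    refine Eventually.of_forall fun ω => ?_
    rw [Real.norm_eq_abs, hDdef]
    simp only
    rw [abs_div, abs_of_nonneg (hP0 (k+1) ω).le]
    calc |C k ω - B k ω| / P (k+1) ω ≤ |C k ω - B k ω| :=
          div_le_self (abs_nonneg _) (hP1 _ ω)
      _ ≤ C k ω + B k ω := by
          rw [abs_sub_le_iff]; constructor <;> nlinarith [hCnn k ω, hBnn k ω]
  have hZint : ∀ n, Integrable (Z n) μ := by
    intro n
    exact (hRPint n).add (integrable_finset_sum _ fun k _ => hDint k)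
  -- adaptedness of Z, D
  have hDmeas : ∀ n k, k ≤ n → Measurable[ℱ n] (D k) := by
    intro n k hk
    exact (((hCad k).mono (ℱ.mono hk) le_rfl).sub
      ((hBad k).mono (ℱ.mono hk) le_rfl)).div (hPmeas n (k+1) (by omega))
  have hZad : ∀ n, Measurable[ℱ n] (Z n) := by
    intro n
    refine (((hRad n).div (hPmeas n n (by omega)))).add ?_
    exact Finset.measurable_sum _ fun k hk =>
      hDmeas n k (by have := Finset.mem_range.1 hk; omega)
  -- the key supermartingale step for Z
  have hZstep : ∀ n, μ[Z (n+1) | ℱ n] ≤ᵐ[μ] Z n := by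
    intro n
    have hinv_meas : StronglyMeasurable[ℱ n] fun ω => (P (n+1) ω)⁻¹ :=
      ((hPmeas n (n+1) le_rfl).inv).stronglyMeasurable
    have hsplit : Z (n+1) = (fun ω => (P (n+1) ω)⁻¹ * R (n+1) ω)
        + fun ω => ∑ k ∈ Finset.range (n+1), D k ω := by
      funext ω
      simp [hZdef, div_eq_inv_mul]
    have hmulint : Integrable ((fun ω => (P (n+1) ω)⁻¹) * R (n+1)) μ := by
      have := hRPint (n+1)
      simpa [div_eq_inv_mul, Pi.mul_def] using this
    have hsumint : Integrable (fun ω => ∑ k ∈ Finset.range (n+1), D k ω) μ :=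
      integrable_finset_sum _ fun k _ => hDint k
    have h1 : μ[Z (n+1) | ℱ n] =ᵐ[μ]
        μ[(fun ω => (P (n+1) ω)⁻¹) * R (n+1) | ℱ n]
          + μ[(fun ω => ∑ k ∈ Finset.range (n+1), D k ω) | ℱ n] := by
      rw [hsplit]
      exact condExp_add hmulint hsumint _
    have h2 : μ[(fun ω => ∑ k ∈ Finset.range (n+1), D k ω) | ℱ n]
        = fun ω => ∑ k ∈ Finset.range (n+1), D k ω := by
      refine condExp_of_stronglyMeasurable (ℱ.le n) ?_ hsumint
      exact (Finset.measurable_sum _ fun k hk =>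
        hDmeas n k (by have := Finset.mem_range.1 hk; omega)).stronglyMeasurable
    have h3 : μ[(fun ω => (P (n+1) ω)⁻¹) * R (n+1) | ℱ n] =ᵐ[μ]
        (fun ω => (P (n+1) ω)⁻¹) * μ[R (n+1) | ℱ n] :=
      condExp_mul_of_stronglyMeasurable_left hinv_meas hmulint (hRint (n+1))
    filter_upwards [h1, h3, hstep n] with ω hω1 hω3 hωs
    have e1 : (μ[Z (n+1) | ℱ n]) ω
        = (P (n+1) ω)⁻¹ * (μ[R (n+1) | ℱ n]) ω + ∑ k ∈ Finset.range (n+1), D k ω := by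
      rw [hω1]
      simp only [Pi.add_apply, Pi.mul_apply, h2, hω3]
    have hPpos := hP0 (n+1) ω
    have hPn := hP0 n ω
    have hA1 : (0:ℝ) < 1 + A n ω := by linarith [hAnn n ω]
    have hkey : (P (n+1) ω)⁻¹ * ((1 + A n ω) * R n ω + B n ω - C n ω)
        + ∑ k ∈ Finset.range (n+1), D k ω = Z n ω := by
      simp only [hZdef, hDdef, Finset.sum_range_succ, hPsucc n ω]
      field_simp
      ring
    have hle : (P (n+1) ω)⁻¹ * (μ[R (n+1) | ℱ n]) ω
        ≤ (P (n+1) ω)⁻¹ * ((1 + A n ω) * R n ω + B n ω - C n ω) :=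
      mul_le_mul_of_nonneg_left hωs (inv_nonneg.2 hPpos.le)
    rw [e1]
    linarith [hle, hkey.le, hkey.ge]
  -- the partial sums S of B/P and the predictable truncation events G
  set S : ℕ → Ω → ℝ := fun n ω => ∑ k ∈ Finset.range n, B k ω / P (k+1) ω with hSdef
  have hSmeas : ∀ n j, j ≤ n + 1 → Measurable[ℱ n] (S j) := by
    intro n j hj
    refine Finset.measurable_sum _ fun k hk => ?_
    have hkn : k ≤ n := by have := Finset.mem_range.1 hk; omega
    exact ((hBad k).mono (ℱ.mono hkn) le_rfl).div (hPmeas n (k+1) (by omega))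
  set G : ℕ → ℕ → Set Ω := fun N k => {ω | ∀ j ≤ k, S (j+1) ω ≤ (N:ℝ)} with hGdef
  have hGmeas : ∀ N n, MeasurableSet[ℱ n] (G N n) := by
    intro N n
    have hGeq : G N n = ⋂ j ∈ Finset.range (n+1), {ω | S (j+1) ω ≤ (N:ℝ)} := by
      ext ω
      simp only [hGdef, Set.mem_setOf_eq, Set.mem_iInter, Finset.mem_range, Nat.lt_succ_iff]
    rw [hGeq]
    exact Set.Finite.measurableSet_biInter (Finset.finite_toSet _) fun j hj =>
      measurableSet_le (hSmeas n (j+1)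
        (by have := Finset.mem_coe.1 hj; have := Finset.mem_range.1 this; omega))
        measurable_const
  have hGanti : ∀ N {j k : ℕ}, j ≤ k → G N k ⊆ G N j := by
    intro N j k hjk ω hω i hi
    exact hω i (le_trans hi hjk)
  have hZ0 : ∀ ω, Z 0 ω = R 0 ω := by
    intro ω; simp [hZdef, hPdef]
  -- Z is bounded below by -S
  have hZlb : ∀ n ω, - S n ω ≤ Z n ω := by
    intro n ω
    have h1 : 0 ≤ R n ω / P n ω := div_nonneg (hRnn n ω) (hP0 n ω).le
    have h2 : ∀ k, - (B k ω / P (k+1) ω) ≤ D k ω := by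
      intro k
      have : - (B k ω / P (k+1) ω) = (- B k ω) / P (k+1) ω := (neg_div _ _).symm
      rw [this, hDdef]
      exact (div_le_div_iff_of_pos_right (hP0 (k+1) ω)).2 (by linarith [hCnn k ω])
    calc - S n ω = ∑ k ∈ Finset.range n, - (B k ω / P (k+1) ω) := by
            simp [hSdef]
      _ ≤ ∑ k ∈ Finset.range n, D k ω := Finset.sum_le_sum fun k _ => h2 k
      _ ≤ Z n ω := le_add_of_nonneg_left h1
  -- the truncated (stopped) process Y
  set Y : ℕ → ℕ → Ω → ℝ := fun N n ω => Z 0 ω + ∑ k ∈ Finset.range n,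
      Set.indicator (G N k) (fun ω' => Z (k+1) ω' - Z k ω') ω with hYdef
  have hYsucc : ∀ N n ω, Y N (n+1) ω = Y N n ω
      + Set.indicator (G N n) (fun ω' => Z (n+1) ω' - Z n ω') ω := by
    intro N n ω
    simp [hYdef, Finset.sum_range_succ]
    ring
  have hYeqZ : ∀ N n ω, (∀ k < n, ω ∈ G N k) → Y N n ω = Z n ω := by
    intro N n ω hmem
    have : ∀ k ∈ Finset.range n,
        Set.indicator (G N k) (fun ω' => Z (k+1) ω' - Z k ω') ω = Z (k+1) ω - Z k ω := by
      intro k hk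
      exact Set.indicator_of_mem (hmem k (Finset.mem_range.1 hk)) _
    rw [hYdef]
    simp only
    rw [Finset.sum_congr rfl this, Finset.sum_range_sub (fun k => Z k ω)]
    ring
  have hindint : ∀ N k, Integrable
      (Set.indicator (G N k) fun ω' => Z (k+1) ω' - Z k ω') μ := by
    intro N k
    exact ((hZint (k+1)).sub (hZint k)).indicator (ℱ.le k _ (hGmeas N k))
  have hYint : ∀ N n, Integrable (Y N n) μ := by
    intro N n
    exact (hZint 0).add (integrable_finset_sum _ fun k _ => hindint N k)
  have hYad : ∀ N n, Measurable[ℱ n] (Y N n) := by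
    intro N n
    refine ((hZad 0).mono (ℱ.mono (Nat.zero_le n)) le_rfl).add ?_
    refine Finset.measurable_sum _ fun k hk => ?_
    have hkn : k < n := Finset.mem_range.1 hk
    exact (((hZad (k+1)).mono (ℱ.mono hkn) le_rfl).sub
      ((hZad k).mono (ℱ.mono hkn.le) le_rfl)).indicator
      ((ℱ.mono hkn.le) _ (hGmeas N k))
  -- supermartingale step for Y
  have hYstep : ∀ N n, μ[Y N (n+1) | ℱ n] ≤ᵐ[μ] Y N n := by
    intro N n
    have hsplit : Y N (n+1) = Y N n
        + Set.indicator (G N n) fun ω' => Z (n+1) ω' - Z n ω' := by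
      funext ω; rw [hYsucc N n ω]; rfl
    have h1 : μ[Y N (n+1) | ℱ n] =ᵐ[μ]
        μ[Y N n | ℱ n] + μ[Set.indicator (G N n) fun ω' => Z (n+1) ω' - Z n ω' | ℱ n] := by
      rw [hsplit]; exact condExp_add (hYint N n) (hindint N n) _
    have h2 : μ[Y N n | ℱ n] = Y N n :=
      condExp_of_stronglyMeasurable (ℱ.le n) ((hYad N n).stronglyMeasurable) (hYint N n)
    have h3 : μ[Set.indicator (G N n) fun ω' => Z (n+1) ω' - Z n ω' | ℱ n] =ᵐ[μ]
        Set.indicator (G N n) (μ[fun ω' => Z (n+1) ω' - Z n ω' | ℱ n]) :=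
      condExp_indicator ((hZint (n+1)).sub (hZint n)) (hGmeas N n)
    have h4 : μ[fun ω' => Z (n+1) ω' - Z n ω' | ℱ n] =ᵐ[μ]
        μ[Z (n+1) | ℱ n] - μ[Z n | ℱ n] := condExp_sub (hZint (n+1)) (hZint n) _
    have h5 : μ[Z n | ℱ n] = Z n :=
      condExp_of_stronglyMeasurable (ℱ.le n) ((hZad n).stronglyMeasurable) (hZint n)
    filter_upwards [h1, h3, h4, hZstep n] with ω hω1 hω3 hω4 hωs
    rw [hω1, Pi.add_apply, h2, hω3]
    have hle0 : Set.indicator (G N n) (μ[fun ω' => Z (n+1) ω' - Z n ω' | ℱ n]) ω ≤ 0 := by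
      by_cases hmem : ω ∈ G N n
      · rw [Set.indicator_of_mem hmem, hω4, Pi.sub_apply, h5]
        linarith
      · rw [Set.indicator_of_notMem hmem]
    linarith
  -- lower bound for Y
  have hYlb : ∀ (N n : ℕ) (ω : Ω), -(N:ℝ) ≤ Y N n ω := by
    intro N n
    induction n with
    | zero =>
      intro ω
      have : Y N 0 ω = Z 0 ω := hYeqZ N 0 ω (by omega)
      rw [this, hZ0]
      have := hRnn 0 ω
      have : (0:ℝ) ≤ (N:ℝ) := Nat.cast_nonneg N
      linarith [hRnn 0 ω]
    | succ n ih =>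
      intro ω
      by_cases hmem : ω ∈ G N n
      · have heq : Y N (n+1) ω = Z (n+1) ω :=
          hYeqZ N (n+1) ω fun k hk => hGanti N (by omega) hmem
        have hS : S (n+1) ω ≤ (N:ℝ) := hmem n le_rfl
        have := hZlb (n+1) ω
        linarith
      · rw [hYsucc N n ω, Set.indicator_of_notMem hmem]
        simpa using ih ω
  -- expected value of Y is non-increasing
  have hYmean : ∀ N n, ∫ ω, Y N n ω ∂μ ≤ ∫ ω, Z 0 ω ∂μ := by
    intro N n
    induction n with
    | zero =>
      refine le_of_eq (integral_congr_ae (Eventually.of_forall fun ω => ?_))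
      exact hYeqZ N 0 ω (by omega)
    | succ n ih =>
      have h1 : ∫ ω, Y N (n+1) ω ∂μ = ∫ ω, (μ[Y N (n+1) | ℱ n]) ω ∂μ :=
        (integral_condExp (ℱ.le n)).symm
      have h2 : ∫ ω, (μ[Y N (n+1) | ℱ n]) ω ∂μ ≤ ∫ ω, Y N n ω ∂μ :=
        integral_mono_ae integrable_condExp (hYint N n) (hYstep N n)
      linarith
  -- L¹ boundedness of Y
  have hYsn : ∀ N n, eLpNorm (Y N n) 1 μ ≤ ENNReal.ofReal (∫ ω, Z 0 ω ∂μ + 2*(N:ℝ)) := by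
    intro N n
    rw [eLpNorm_one_eq_lintegral_enorm,
      ← ofReal_integral_norm_eq_lintegral_enorm (hYint N n)]
    refine ENNReal.ofReal_le_ofReal ?_
    have hptw : ∀ ω, ‖Y N n ω‖ ≤ Y N n ω + 2*(N:ℝ) := by
      intro ω
      have := hYlb N n ω
      rw [Real.norm_eq_abs]
      rcases abs_cases (Y N n ω) with ⟨h, _⟩ | ⟨h, _⟩ <;>
        [linarith [Nat.cast_nonneg (α := ℝ) N]; linarith]
    calc ∫ ω, ‖Y N n ω‖ ∂μ ≤ ∫ ω, (Y N n ω + 2*(N:ℝ)) ∂μ :=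
          integral_mono (hYint N n).norm ((hYint N n).add (integrable_const _))
            hptw
      _ = ∫ ω, Y N n ω ∂μ + 2*(N:ℝ) := by
          rw [integral_add (hYint N n) (integrable_const _), integral_const]
          simp
      _ ≤ ∫ ω, Z 0 ω ∂μ + 2*(N:ℝ) := by linarith [hYmean N n]
  -- each truncated process converges a.e.
  have hconv : ∀ N : ℕ, ∀ᵐ ω ∂μ, ∃ c, Tendsto (fun n => Y N n ω) atTop (nhds c) := by
    intro N
    have hsub : Submartingale (fun n ω => - Y N n ω) ℱ μ := by
      refine submartingale_nat (fun n => ((hYad N n).neg).stronglyMeasurable)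
        (fun n => (hYint N n).neg) fun n => ?_
      have hn : μ[fun ω => - Y N (n+1) ω | ℱ n] =ᵐ[μ] fun ω => - (μ[Y N (n+1) | ℱ n]) ω := by
        have := condExp_neg (Y N (n+1)) (m := ℱ n) (μ := μ)
        filter_upwards [this] with ω hω
        exact hω
      filter_upwards [hn, hYstep N n] with ω hω1 hω2
      rw [hω1]
      simpa using hω2
    have hbdd : ∀ n, eLpNorm (fun ω => - Y N n ω) 1 μ
        ≤ ENNReal.ofReal (∫ ω, Z 0 ω ∂μ + 2*(N:ℝ)) := by
      intro n
      calc eLpNorm (fun ω => - Y N n ω) 1 μ = eLpNorm (Y N n) 1 μ := by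
            rw [← eLpNorm_neg (f := Y N n)]; rfl
        _ ≤ _ := hYsn N n
    filter_upwards [hsub.exists_ae_tendsto_of_bdd hbdd] with ω ⟨c, hc⟩
    exact ⟨-c, by simpa using hc.neg⟩
  -- pointwise conclusion
  filter_upwards [ae_all_iff.2 hconv] with ω hω
  rintro ⟨hA, hB⟩
  set b : ℝ := ∑' k, B k ω with hbdef
  have hSle : ∀ n, S n ω ≤ b := by
    intro n
    calc S n ω ≤ ∑ k ∈ Finset.range n, B k ω :=
          Finset.sum_le_sum fun k _ => div_le_self (hBnn k ω) (hP1 _ ω)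
      _ ≤ b := Summable.sum_le_tsum _ (fun k _ => hBnn k ω) hB
  set N : ℕ := ⌈b⌉₊ with hNdef
  have hbN : b ≤ (N:ℝ) := Nat.le_ceil b
  have hmem : ∀ k, ω ∈ G N k := fun k j _ => le_trans (hSle (j+1)) hbN
  obtain ⟨ζ, hζ⟩ := hω N
  have hZconv : Tendsto (fun n => Z n ω) atTop (nhds ζ) :=
    hζ.congr fun n => hYeqZ N n ω fun k _ => hmem k
  -- convergence of P
  have hPbdd : ∀ n, P n ω ≤ Real.exp (∑' k, A k ω) := by
    intro n
    calc P n ω ≤ ∏ k ∈ Finset.range n, Real.exp (A k ω) := by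
          refine Finset.prod_le_prod (fun k _ => by linarith [hAnn k ω]) fun k _ => ?_
          have := Real.add_one_le_exp (A k ω)
          linarith
      _ = Real.exp (∑ k ∈ Finset.range n, A k ω) := (Real.exp_sum _ _).symm
      _ ≤ Real.exp (∑' k, A k ω) :=
          Real.exp_le_exp.2 (Summable.sum_le_tsum _ (fun k _ => hAnn k ω) hA)
  have hPbdd' : BddAbove (Set.range fun n => P n ω) := by
    refine ⟨Real.exp (∑' k, A k ω), ?_⟩
    rintro x ⟨n, rfl⟩
    exact hPbdd n
  have hPtend : Tendsto (fun n => P n ω) atTop (nhds (⨆ n, P n ω)) :=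
    tendsto_atTop_ciSup (hPmono ω) hPbdd'
  set p : ℝ := ⨆ n, P n ω with hpdef
  have hple : ∀ n, P n ω ≤ p := fun n => le_ciSup hPbdd' n
  -- convergence of S
  have hSmono : Monotone fun n => S n ω := by
    refine monotone_nat_of_le_succ fun n => ?_
    have : S (n+1) ω = S n ω + B n ω / P (n+1) ω := by
      simp [hSdef, Finset.sum_range_succ]
    rw [this]
    have := div_nonneg (hBnn n ω) (hP0 (n+1) ω).le
    linarith
  have hSbdd : BddAbove (Set.range fun n => S n ω) := by
    refine ⟨b, ?_⟩; rintro x ⟨n, rfl⟩; exact hSle n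
  have hStend : Tendsto (fun n => S n ω) atTop (nhds (⨆ n, S n ω)) :=
    tendsto_atTop_ciSup hSmono hSbdd
  have hW : Tendsto (fun n => Z n ω + S n ω) atTop (nhds (ζ + ⨆ n, S n ω)) :=
    hZconv.add hStend
  -- partial sums of C/P are bounded by Z + S
  have hZS : ∀ n, Z n ω + S n ω
      = R n ω / P n ω + ∑ k ∈ Finset.range n, C k ω / P (k+1) ω := by
    intro n
    simp only [hZdef, hSdef, hDdef]
    rw [add_assoc, ← Finset.sum_add_distrib]
    congr 1
    refine Finset.sum_congr rfl fun k _ => ?_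
    rw [← add_div]
    ring_nf
  have hTle : ∀ n, ∑ k ∈ Finset.range n, C k ω / P (k+1) ω ≤ Z n ω + S n ω := by
    intro n
    rw [hZS n]
    have := div_nonneg (hRnn n ω) (hP0 n ω).le
    linarith
  obtain ⟨M, hM⟩ := hW.bddAbove_range
  have hMle : ∀ n, Z n ω + S n ω ≤ M := fun n => hM ⟨n, rfl⟩
  have hCsum' : Summable fun k => C k ω / P (k+1) ω :=
    summable_of_sum_range_le (fun k => div_nonneg (hCnn k ω) (hP0 _ ω).le)
      fun n => le_trans (hTle n) (hMle n)
  have hCsum : Summable fun k => C k ω := by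
    refine Summable.of_nonneg_of_le (fun k => hCnn k ω) (fun k => ?_) (hCsum'.mul_right p)
    have h0 := hP0 (k+1) ω
    calc C k ω = C k ω / P (k+1) ω * P (k+1) ω := (div_mul_cancel₀ _ h0.ne').symm
      _ ≤ C k ω / P (k+1) ω * p :=
          mul_le_mul_of_nonneg_left (hple (k+1)) (div_nonneg (hCnn k ω) h0.le)
  refine ⟨?_, hCsum⟩
  have hT : Tendsto (fun n => ∑ k ∈ Finset.range n, C k ω / P (k+1) ω) atTop
      (nhds (∑' k, C k ω / P (k+1) ω)) := hCsum'.hasSum.tendsto_sum_nat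
  have hRPt : Tendsto (fun n => R n ω / P n ω) atTop
      (nhds ((ζ + ⨆ n, S n ω) - ∑' k, C k ω / P (k+1) ω)) := by
    refine (hW.sub hT).congr fun n => ?_
    rw [hZS n]
    ring
  refine ⟨((ζ + ⨆ n, S n ω) - ∑' k, C k ω / P (k+1) ω) * p, ?_⟩
  refine (hRPt.mul hPtend).congr fun n => ?_
  exact div_mul_cancel₀ _ (hP0 n ω).ne'
end

section
/- Let (M_n) be a vector-valued martingale adapted to a filtration (ℱ_n), and let (d_n) be a positive deterministic sequence with d_n ↑ ∞. If Σ_{n≥1} d_n^{-2} E[‖M_n - M_{n-1}‖² | ℱ_{n-1}] < ∞ almost surely, then d_n^{-1} M_n → 0 almost surely. -/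
open MeasureTheory Filter


lemma weighted_avg_zero (d : ℕ → ℝ) (hdpos : ∀ n, 0 < d n) (hdtop : Tendsto d atTop atTop)
    (w r : ℕ → ℝ) (hw : ∀ k, 0 ≤ w k) (hwd : ∀ n, ∑ k ∈ Finset.range n, w k ≤ d n)
    (hr : Tendsto r atTop (nhds 0)) :
    Tendsto (fun n => (d n)⁻¹ * ∑ k ∈ Finset.range n, w k * r k) atTop (nhds 0) := by
  rw [Metric.tendsto_atTop] at hr ⊢
  intro ε hε
  obtain ⟨N₁, hN₁⟩ := hr (ε / 4) (by linarith)
  set C : ℝ := ∑ k ∈ Finset.range N₁, w k * |r k| with hC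
  have hC0 : 0 ≤ C := Finset.sum_nonneg fun k _ => mul_nonneg (hw k) (abs_nonneg _)
  obtain ⟨N₂, hN₂⟩ := (tendsto_atTop.1 hdtop (4 * (C + 1) / ε)).exists_forall_of_atTop
  refine ⟨max N₁ N₂, fun n hn => ?_⟩
  have hn₁ : N₁ ≤ n := le_trans (le_max_left _ _) hn
  have hn₂ : N₂ ≤ n := le_trans (le_max_right _ _) hn
  have hdn : 4 * (C + 1) / ε ≤ d n := hN₂ n hn₂
  have hdn0 : 0 < d n := hdpos n
  -- bound the sum
  have hsplit : ∑ k ∈ Finset.range n, w k * r k =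
      (∑ k ∈ Finset.range N₁, w k * r k) + ∑ k ∈ Finset.Ico N₁ n, w k * r k := by
    rw [← Finset.sum_range_add_sum_Ico _ hn₁]
  have habs : |∑ k ∈ Finset.range n, w k * r k| ≤ C + (ε / 4) * d n := by
    rw [hsplit]
    refine (abs_add_le _ _).trans (add_le_add ?_ ?_)
    · exact (Finset.abs_sum_le_sum_abs _ _).trans (le_of_eq (by simp [abs_mul, abs_of_nonneg (hw _), hC]))
    · refine (Finset.abs_sum_le_sum_abs _ _).trans ?_
      have h1 : ∀ k ∈ Finset.Ico N₁ n, |w k * r k| ≤ w k * (ε / 4) := by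
        intro k hk
        rw [abs_mul, abs_of_nonneg (hw k)]
        refine mul_le_mul_of_nonneg_left ?_ (hw k)
        have := hN₁ k (Finset.mem_Ico.1 hk).1
        rw [Real.dist_eq, sub_zero] at this
        exact this.le
      refine (Finset.sum_le_sum h1).trans ?_
      rw [← Finset.sum_mul]
      rw [mul_comm]
      refine mul_le_mul_of_nonneg_left ?_ (by linarith)
      calc ∑ k ∈ Finset.Ico N₁ n, w k ≤ ∑ k ∈ Finset.range n, w k := by
            refine Finset.sum_le_sum_of_subset_of_nonneg ?_ (fun k _ _ => hw k)
            intro k hk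
            exact Finset.mem_range.2 (Finset.mem_Ico.1 hk).2
        _ ≤ d n := hwd n
  rw [Real.dist_eq, sub_zero, abs_mul, abs_of_nonneg (inv_nonneg.2 hdn0.le)]
  have : (d n)⁻¹ * |∑ k ∈ Finset.range n, w k * r k| ≤ (d n)⁻¹ * (C + (ε/4) * d n) :=
    mul_le_mul_of_nonneg_left habs (inv_nonneg.2 hdn0.le)
  refine lt_of_le_of_lt this ?_
  rw [mul_add]
  have h2 : (d n)⁻¹ * ((ε/4) * d n) = ε / 4 := by field_simp
  have h3 : (d n)⁻¹ * C ≤ ε / 4 := by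
    rw [inv_mul_le_iff₀ hdn0]
    have h4 : 4 * (C + 1) ≤ d n * ε := (div_le_iff₀ hε).1 hdn
    nlinarith
  rw [h2]
  linarith

lemma kronecker_real (d : ℕ → ℝ) (hdpos : ∀ n, 0 < d n) (hdmono : Monotone d)
    (hdtop : Tendsto d atTop atTop) (x : ℕ → ℝ) (c : ℝ)
    (hs : Tendsto (fun n => ∑ k ∈ Finset.range n, (d (k + 1))⁻¹ * x k) atTop (nhds c)) :
    Tendsto (fun n => (d n)⁻¹ * ∑ k ∈ Finset.range n, x k) atTop (nhds 0) := by
  set s : ℕ → ℝ := fun n => ∑ k ∈ Finset.range n, (d (k + 1))⁻¹ * x k with hs_def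
  set w : ℕ → ℝ := fun k => d (k + 1) - d k with hw_def
  have hw : ∀ k, 0 ≤ w k := fun k => sub_nonneg.2 (hdmono (Nat.le_succ k))
  have hwsum : ∀ n, ∑ k ∈ Finset.range n, w k = d n - d 0 := fun n => Finset.sum_range_sub d n
  have habel : ∀ n, ∑ k ∈ Finset.range n, x k = d n * s n - ∑ k ∈ Finset.range n, w k * s k := by
    intro n
    induction n with
    | zero => simp [s]
    | succ n ih =>
      rw [Finset.sum_range_succ, ih, Finset.sum_range_succ]
      have hx : x n = d (n + 1) * (s (n + 1) - s n) := by
        have : s (n + 1) - s n = (d (n + 1))⁻¹ * x n := by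
          simp [hs_def, Finset.sum_range_succ]
        rw [this, ← mul_assoc, mul_inv_cancel₀ (ne_of_gt (hdpos (n+1))), one_mul]
      rw [hx]; simp only [w]; ring
  set r : ℕ → ℝ := fun k => s k - c with hr_def
  have hr : Tendsto r atTop (nhds 0) := by
    simpa [hr_def] using hs.sub (tendsto_const_nhds (x := c))
  have heq : ∀ n, (d n)⁻¹ * ∑ k ∈ Finset.range n, x k =
      r n + c * d 0 * (d n)⁻¹ - (d n)⁻¹ * ∑ k ∈ Finset.range n, w k * r k := by
    intro n
    have hd0 : d n ≠ 0 := ne_of_gt (hdpos n)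
    have h1 : ∑ k ∈ Finset.range n, w k * s k
        = (∑ k ∈ Finset.range n, w k * r k) + c * (d n - d 0) := by
      rw [← hwsum n, Finset.mul_sum, ← Finset.sum_add_distrib]
      refine Finset.sum_congr rfl fun k _ => ?_
      simp only [r]; ring
    rw [habel n, h1]
    field_simp
    ring
  have h1 : Tendsto (fun n => r n + c * d 0 * (d n)⁻¹ -
      (d n)⁻¹ * ∑ k ∈ Finset.range n, w k * r k) atTop (nhds 0) := by
    have ha : Tendsto (fun n => c * d 0 * (d n)⁻¹) atTop (nhds 0) := by
      simpa using (tendsto_const_nhds (x := c * d 0)).mul (hdtop.inv_tendsto_atTop)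
    have hb := weighted_avg_zero d hdpos hdtop w r hw
      (fun n => by rw [hwsum n]; linarith [hdpos 0]) hr
    simpa using (hr.add ha).sub hb
  exact (tendsto_congr heq).2 h1

lemma stopped_sum_le_min (A : ℕ → ℝ) (hA0 : A 0 = 0) (hmono : ∀ n, A n ≤ A (n + 1))
    (K : ℝ) (hK : 0 ≤ K) :
    ∀ n, (∑ k ∈ Finset.range n, if A (k + 1) ≤ K then A (k + 1) - A k else 0) ≤ min K (A n) := by
  intro n
  induction n with
  | zero => simp [hA0, hK]
  | succ n ih =>
    rw [Finset.sum_range_succ]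
    by_cases hcase : A (n + 1) ≤ K
    · rw [if_pos hcase]
      refine le_min ?_ ?_
      · have : (∑ k ∈ Finset.range n, if A (k + 1) ≤ K then A (k + 1) - A k else 0) ≤ A n :=
          (ih.trans (min_le_right _ _))
        linarith
      · have := ih.trans (min_le_right _ _)
        linarith
    · rw [if_neg hcase, add_zero]
      exact ih.trans (min_le_min le_rfl (hmono n))

lemma chow_real {Ω : Type*} {m : MeasurableSpace Ω} (μ : Measure Ω) [IsProbabilityMeasure μ]
    (ℱ : Filtration ℕ m) (f : ℕ → Ω → ℝ)
    (hf : Martingale f ℱ μ) (hf2 : ∀ n, MemLp (f n) 2 μ)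
    (d : ℕ → ℝ) (hdpos : ∀ n, 0 < d n) (hdmono : Monotone d)
    (hdtop : Tendsto d atTop atTop)
    (hsum : ∀ᵐ ω ∂μ, Summable (fun n => ((d (n + 1)) ^ 2)⁻¹ *
        (condExp (ℱ n) μ (fun ω' => (f (n + 1) ω' - f n ω') ^ 2) ω))) :
    ∀ᵐ ω ∂μ, Tendsto (fun n => (d n)⁻¹ * f n ω) atTop (nhds 0) := by
  classical
  -- increments
  set X : ℕ → Ω → ℝ := fun k ω => f (k + 1) ω - f k ω with hX_def
  have hX2 : ∀ k, MemLp (X k) 2 μ := fun k => (hf2 (k + 1)).sub (hf2 k)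
  have hXint : ∀ k, Integrable (X k) μ := fun k => (hX2 k).integrable one_le_two
  have hXsq_int : ∀ k, Integrable (fun ω => X k ω ^ 2) μ := fun k => (hX2 k).integrable_sq
  have hXmeas : ∀ k, StronglyMeasurable[ℱ (k + 1)] (X k) := fun k =>
    (hf.stronglyMeasurable (k + 1)).sub ((hf.stronglyMeasurable k).mono (ℱ.mono k.le_succ))
  have hXcond : ∀ k, μ[X k|ℱ k] =ᵐ[μ] 0 := by
    intro k
    have h1 : μ[f (k + 1) - f k|ℱ k] =ᵐ[μ] μ[f (k + 1)|ℱ k] - μ[f k|ℱ k] :=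
      condExp_sub (hf.integrable _) (hf.integrable _) _
    have h2 := hf.condExp_ae_eq (Nat.le_succ k)
    have h3 : μ[f k|ℱ k] = f k :=
      condExp_of_stronglyMeasurable (ℱ.le k) (hf.stronglyMeasurable k) (hf.integrable k)
    have : μ[X k|ℱ k] =ᵐ[μ] μ[f (k + 1)|ℱ k] - μ[f k|ℱ k] := h1
    filter_upwards [this, h2] with ω hω h2ω
    simp only [Pi.sub_apply, Pi.zero_apply] at *
    rw [hω, h2ω, h3]
    simp
  -- conditional variances
  set V : ℕ → Ω → ℝ := fun k => condExp (ℱ k) μ (fun ω' => (f (k + 1) ω' - f k ω') ^ 2) with hV_def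
  have hVmeas : ∀ k, StronglyMeasurable[ℱ k] (V k) := fun k => stronglyMeasurable_condExp
  have hVint : ∀ k, Integrable (V k) μ := fun k => integrable_condExp
  have hVnn : ∀ᵐ ω ∂μ, ∀ k, 0 ≤ V k ω := by
    rw [ae_all_iff]
    exact fun k => condExp_nonneg (Eventually.of_forall fun ω => sq_nonneg _)
  -- predictable quadratic variation
  set A : ℕ → Ω → ℝ := fun n ω => ∑ k ∈ Finset.range n, ((d (k + 1)) ^ 2)⁻¹ * V k ω with hA_def
  have hAmeas : ∀ k, StronglyMeasurable[ℱ k] (A (k + 1)) := by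
    intro k
    refine Finset.stronglyMeasurable_fun_sum _ fun j hj => ?_
    exact ((hVmeas j).mono (ℱ.mono (Nat.lt_succ_iff.1 (Finset.mem_range.1 hj)))).const_mul _
  -- the main localized statement
  have hKmain : ∀ K : ℕ, ∀ᵐ ω ∂μ, (∀ n, A n ω ≤ K) →
      ∃ c, Tendsto (fun n => ∑ k ∈ Finset.range n, (d (k + 1))⁻¹ * X k ω) atTop (nhds c) := by
    intro K
    -- stopped coefficients
    set S : ℕ → Set Ω := fun k => {ω | A (k + 1) ω ≤ (K : ℝ)} with hS_def
    have hSmeas : ∀ k, MeasurableSet[ℱ k] (S k) := fun k =>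
      measurableSet_le (hAmeas k).measurable measurable_const
    set c : ℕ → Ω → ℝ := fun k => (S k).indicator fun _ => (d (k + 1))⁻¹ with hc_def
    have hcmeas : ∀ k, StronglyMeasurable[ℱ k] (c k) := fun k =>
      stronglyMeasurable_const.indicator (hSmeas k)
    have hcbdd : ∀ k ω, ‖c k ω‖ ≤ (d (k + 1))⁻¹ := by
      intro k ω
      rw [Real.norm_eq_abs]
      by_cases hω : ω ∈ S k
      · rw [hc_def]; simp only [Set.indicator_of_mem hω]
        rw [abs_of_nonneg (inv_nonneg.2 (hdpos _).le)]
      · rw [hc_def]; simp only [Set.indicator_of_notMem hω]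
        simp [inv_nonneg.2 (hdpos (k + 1)).le]
    -- stopped process
    set u : ℕ → Ω → ℝ := fun k ω => c k ω * X k ω with hu_def
    have hu2 : ∀ k, MemLp (u k) 2 μ := by
      intro k
      refine MemLp.of_le_mul (c := (d (k + 1))⁻¹) (hX2 k)
        ((((hcmeas k).mono (ℱ.le k)).aestronglyMeasurable).mul (hX2 k).1) ?_
      refine Eventually.of_forall fun ω => ?_
      rw [norm_mul]
      exact mul_le_mul_of_nonneg_right (hcbdd k ω) (norm_nonneg _)
    have huint : ∀ k, Integrable (u k) μ := fun k => (hu2 k).integrable one_le_two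
    set h : ℕ → Ω → ℝ := fun n ω => ∑ k ∈ Finset.range n, u k ω with hh_def
    have hh2 : ∀ n, MemLp (h n) 2 μ := fun n => memLp_finsetSum (Finset.range n) fun k _ => hu2 k
    have hhint : ∀ n, Integrable (h n) μ := fun n => (hh2 n).integrable one_le_two
    have hhadp : StronglyAdapted ℱ h := by
      intro n
      refine Finset.stronglyMeasurable_fun_sum _ fun k hk => ?_
      have hk' : k + 1 ≤ n := Finset.mem_range.1 hk
      exact ((hcmeas k).mono (ℱ.mono (Nat.le_of_succ_le hk'))).mul
        ((hXmeas k).mono (ℱ.mono hk'))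
    have hhstep : ∀ n ω, h (n + 1) ω = h n ω + u n ω := by
      intro n ω; rw [hh_def]; simp [Finset.sum_range_succ]
    -- martingale property
    have hmart : Martingale h ℱ μ := by
      refine martingale_of_condExp_sub_eq_zero_nat hhadp hhint fun i => ?_
      have heq : h (i + 1) - h i = fun ω => c i ω * X i ω := by
        ext ω; simp [hhstep i ω, hu_def]
      rw [heq]
      have hpull : μ[c i * X i|ℱ i] =ᵐ[μ] c i * μ[X i|ℱ i] :=
        condExp_stronglyMeasurable_mul_of_bound (ℱ.le i) (hcmeas i) (hXint i) _
          (Eventually.of_forall (hcbdd i))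
      have : (fun ω => c i ω * X i ω) = c i * X i := rfl
      rw [this]
      filter_upwards [hpull, hXcond i] with ω h1 h2
      simp only [Pi.mul_apply, Pi.zero_apply] at *
      rw [h1, h2, mul_zero]
    -- cross terms vanish
    have hprod_int : ∀ n, Integrable (fun ω => h n ω * u n ω) μ := by
      intro n
      refine Integrable.mono' (((hh2 n).integrable_sq.add (hu2 n).integrable_sq).div_const 2)
        ((((hh2 n).1)).mul ((hu2 n).1)) ?_
      refine Eventually.of_forall fun ω => ?_
      show |h n ω * u n ω| ≤ (h n ω ^ 2 + u n ω ^ 2) / 2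
      refine abs_le.2 ⟨?_, ?_⟩ <;>
        nlinarith [sq_nonneg (h n ω - u n ω), sq_nonneg (h n ω + u n ω)]
    have hcross : ∀ n, ∫ ω, h n ω * u n ω ∂μ = 0 := by
      intro n
      have hφmeas : StronglyMeasurable[ℱ n] (fun ω => h n ω * c n ω) :=
        (hhadp n).mul (hcmeas n)
      have hφXint : Integrable (fun ω => (h n ω * c n ω) * X n ω) μ := by
        have : (fun ω => (h n ω * c n ω) * X n ω) = fun ω => h n ω * u n ω := by
          ext ω; rw [hu_def]; ring
        rw [this]; exact hprod_int n
      have hpull : μ[(fun ω => h n ω * c n ω) * X n|ℱ n]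
          =ᵐ[μ] (fun ω => h n ω * c n ω) * μ[X n|ℱ n] :=
        condExp_mul_of_stronglyMeasurable_left hφmeas hφXint (hXint n)
      have h1 : ∫ ω, h n ω * u n ω ∂μ = ∫ ω, ((fun ω => h n ω * c n ω) * X n) ω ∂μ := by
        refine integral_congr_ae (Eventually.of_forall fun ω => ?_)
        simp only [Pi.mul_apply, hu_def]; ring
      rw [h1, ← integral_condExp (ℱ.le n) (f := (fun ω => h n ω * c n ω) * X n) (μ := μ), integral_congr_ae hpull]
      have h2 : (fun ω => h n ω * c n ω) * μ[X n|ℱ n] =ᵐ[μ] 0 := by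
        filter_upwards [hXcond n] with ω hω
        simp only [Pi.mul_apply, Pi.zero_apply] at *
        rw [hω, mul_zero]
      rw [integral_congr_ae h2]
      simp
    -- diagonal terms
    have hQint : ∀ k, Integrable (fun ω => c k ω ^ 2 * V k ω) μ := by
      intro k
      refine Integrable.bdd_mul (c := ((d (k + 1))⁻¹) ^ 2) (hVint k)
        (((hcmeas k).mono (ℱ.le k)).aestronglyMeasurable.pow 2) ?_
      refine Eventually.of_forall fun ω => ?_
      rw [norm_pow]
      exact pow_le_pow_left₀ (norm_nonneg _) (hcbdd k ω) 2
    have hdiag : ∀ k, ∫ ω, u k ω ^ 2 ∂μ = ∫ ω, c k ω ^ 2 * V k ω ∂μ := by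
      intro k
      have hsqmeas : StronglyMeasurable[ℱ k] (fun ω => c k ω ^ 2) := (hcmeas k).pow 2
      have hpull : μ[(fun ω => c k ω ^ 2) * (fun ω => X k ω ^ 2)|ℱ k]
          =ᵐ[μ] (fun ω => c k ω ^ 2) * μ[(fun ω => X k ω ^ 2)|ℱ k] := by
        refine condExp_stronglyMeasurable_mul_of_bound (ℱ.le k) hsqmeas (hXsq_int k)
          (((d (k + 1))⁻¹) ^ 2) ?_
        refine Eventually.of_forall fun ω => ?_
        rw [norm_pow]
        exact pow_le_pow_left₀ (norm_nonneg _) (hcbdd k ω) 2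
      have h1 : ∫ ω, u k ω ^ 2 ∂μ
          = ∫ ω, ((fun ω => c k ω ^ 2) * (fun ω => X k ω ^ 2)) ω ∂μ := by
        refine integral_congr_ae (Eventually.of_forall fun ω => ?_)
        simp only [Pi.mul_apply, hu_def]; ring
      have hint2 : Integrable ((fun ω => c k ω ^ 2) * (fun ω => X k ω ^ 2)) μ := by
        refine Integrable.bdd_mul (c := ((d (k + 1))⁻¹) ^ 2) (hXsq_int k)
          (((hcmeas k).mono (ℱ.le k)).aestronglyMeasurable.pow 2) ?_
        refine Eventually.of_forall fun ω => ?_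
        rw [norm_pow]
        exact pow_le_pow_left₀ (norm_nonneg _) (hcbdd k ω) 2
      rw [h1, ← integral_condExp (ℱ.le k) (f := (fun ω => c k ω ^ 2) * fun ω => X k ω ^ 2) (μ := μ), integral_congr_ae hpull]
      refine integral_congr_ae ?_
      refine Eventually.of_forall fun ω => ?_
      simp only [Pi.mul_apply, hV_def, hX_def]
    -- second moment bound by induction
    have hsecond : ∀ n, ∫ ω, h n ω ^ 2 ∂μ ≤ ∑ k ∈ Finset.range n, ∫ ω, c k ω ^ 2 * V k ω ∂μ := by
      intro n
      induction n with
      | zero => simp [hh_def]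
      | succ n ih =>
        have hexp : ∀ ω, h (n + 1) ω ^ 2
            = h n ω ^ 2 + (2 * (h n ω * u n ω) + u n ω ^ 2) := by
          intro ω; rw [hhstep n ω]; ring
        have hint1 : Integrable (fun ω => 2 * (h n ω * u n ω) + u n ω ^ 2) μ :=
          ((hprod_int n).const_mul 2).add (hu2 n).integrable_sq
        have : ∫ ω, h (n + 1) ω ^ 2 ∂μ
            = ∫ ω, h n ω ^ 2 ∂μ + ∫ ω, (2 * (h n ω * u n ω) + u n ω ^ 2) ∂μ := by
          rw [← integral_add (hh2 n).integrable_sq hint1]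
          exact integral_congr_ae (Eventually.of_forall fun ω => hexp ω)
        rw [this, integral_add ((hprod_int n).const_mul 2) (hu2 n).integrable_sq,
          integral_const_mul, hcross n, mul_zero, zero_add, hdiag n, Finset.sum_range_succ]
        linarith
    -- bound the sum of diagonal terms by K
    have hsum_le : ∀ n, ∑ k ∈ Finset.range n, ∫ ω, c k ω ^ 2 * V k ω ∂μ ≤ (K : ℝ) := by
      intro n
      rw [← integral_finset_sum _ fun k _ => hQint k]
      have hptwise : ∀ᵐ ω ∂μ, ∑ k ∈ Finset.range n, c k ω ^ 2 * V k ω ≤ (K : ℝ) := by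
        filter_upwards [hVnn] with ω hω
        have hterm : ∀ k, c k ω ^ 2 * V k ω
            = if A (k + 1) ω ≤ (K : ℝ) then A (k + 1) ω - A k ω else 0 := by
          intro k
          have hAdiff : A (k + 1) ω - A k ω = ((d (k + 1)) ^ 2)⁻¹ * V k ω := by
            rw [hA_def]; simp [Finset.sum_range_succ]
          by_cases hcase : ω ∈ S k
          · have hcase' : A (k + 1) ω ≤ (K : ℝ) := hcase
            rw [if_pos hcase', hAdiff, hc_def]
            simp only [Set.indicator_of_mem hcase]
            rw [← inv_pow]
          · have hcase' : ¬ A (k + 1) ω ≤ (K : ℝ) := hcase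
            rw [if_neg hcase', hc_def]
            simp only [Set.indicator_of_notMem hcase]
            ring
        calc ∑ k ∈ Finset.range n, c k ω ^ 2 * V k ω
            = ∑ k ∈ Finset.range n, if A (k + 1) ω ≤ (K : ℝ) then A (k + 1) ω - A k ω else 0 :=
              Finset.sum_congr rfl fun k _ => hterm k
          _ ≤ min (K : ℝ) (A n ω) := by
              refine stopped_sum_le_min (fun j => A j ω) ?_ ?_ _ (Nat.cast_nonneg K) n
              · simp [hA_def]
              · intro j
                rw [hA_def]; simp only [Finset.sum_range_succ]
                have := mul_nonneg (inv_nonneg.2 (sq_nonneg (d (j + 1)))) (hω j)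
                linarith
          _ ≤ (K : ℝ) := min_le_left _ _
      calc ∫ ω, ∑ k ∈ Finset.range n, c k ω ^ 2 * V k ω ∂μ
          ≤ ∫ _ω, (K : ℝ) ∂μ :=
            integral_mono_ae (integrable_finset_sum _ fun k _ => hQint k)
              (integrable_const _) hptwise
        _ = (K : ℝ) := by simp
    -- L¹ bound
    set R : NNReal := (((K : ℝ) + 1) / 2).toNNReal with hR_def
    have hL1 : ∀ n, eLpNorm (h n) 1 μ ≤ (R : ENNReal) := by
      intro n
      have habs : ∫ ω, ‖h n ω‖ ∂μ ≤ ((K : ℝ) + 1) / 2 := by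
        have hmono2 : ∀ ω, ‖h n ω‖ ≤ (h n ω ^ 2 + 1) / 2 := by
          intro ω
          rw [Real.norm_eq_abs]
          nlinarith [sq_nonneg (|h n ω| - 1), sq_abs (h n ω), abs_nonneg (h n ω)]
        calc ∫ ω, ‖h n ω‖ ∂μ ≤ ∫ ω, (h n ω ^ 2 + 1) / 2 ∂μ :=
              integral_mono (hhint n).norm
                (((hh2 n).integrable_sq.add (integrable_const 1)).div_const 2)
                hmono2
          _ = (∫ ω, h n ω ^ 2 ∂μ + 1) / 2 := by
              rw [integral_div, integral_add (hh2 n).integrable_sq (integrable_const 1)]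
              simp
          _ ≤ ((K : ℝ) + 1) / 2 := by
              have := (hsecond n).trans (hsum_le n)
              linarith
      have h1 : eLpNorm (h n) 1 μ = ENNReal.ofReal (∫ ω, ‖h n ω‖ ∂μ) := by
        rw [eLpNorm_one_eq_lintegral_enorm, ← ofReal_integral_norm_eq_lintegral_enorm (hhint n)]
      rw [h1, hR_def]
      exact (ENNReal.ofReal_le_ofReal habs).trans (le_of_eq rfl)
    have hconv := hmart.submartingale.exists_ae_tendsto_of_bdd hL1
    filter_upwards [hconv] with ω hω hbound
    obtain ⟨cc, hcc⟩ := hω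
    refine ⟨cc, ?_⟩
    have heq : ∀ n, h n ω = ∑ k ∈ Finset.range n, (d (k + 1))⁻¹ * X k ω := by
      intro n
      rw [hh_def]
      refine Finset.sum_congr rfl fun k _ => ?_
      have hmem : ω ∈ S k := hbound (k + 1)
      rw [hu_def, hc_def]
      simp [Set.indicator_of_mem hmem]
    exact (tendsto_congr heq).1 hcc
  -- combine over K and apply Kronecker's lemma
  rw [← ae_all_iff] at hKmain
  filter_upwards [hsum, hVnn, hKmain] with ω hω hVω hKω
  have hA_le : ∀ n, A n ω ≤ ∑' k, ((d (k + 1)) ^ 2)⁻¹ * V k ω := fun n =>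
    Summable.sum_le_tsum (Finset.range n)
      (fun k _ => mul_nonneg (inv_nonneg.2 (sq_nonneg _)) (hVω k)) hω
  obtain ⟨K, hK⟩ := exists_nat_ge (∑' k, ((d (k + 1)) ^ 2)⁻¹ * V k ω)
  obtain ⟨cc, hcc⟩ := hKω K (fun n => (hA_le n).trans hK)
  have h1 : Tendsto (fun n => (d n)⁻¹ * ∑ k ∈ Finset.range n, X k ω) atTop (nhds 0) :=
    kronecker_real d hdpos hdmono hdtop _ cc hcc
  have h2 : Tendsto (fun n => (d n)⁻¹ * f 0 ω) atTop (nhds 0) := by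
    simpa using hdtop.inv_tendsto_atTop.mul_const (f 0 ω)
  have heq : ∀ n, (d n)⁻¹ * f n ω
      = (d n)⁻¹ * f 0 ω + (d n)⁻¹ * ∑ k ∈ Finset.range n, X k ω := by
    intro n
    have hts : ∑ k ∈ Finset.range n, X k ω = f n ω - f 0 ω :=
      Finset.sum_range_sub (fun k => f k ω) n
    rw [hts]; ring
  exact (tendsto_congr heq).2 (by simpa using h2.add h1)

section Aux

variable {Ω : Type*} {m : MeasurableSpace Ω} {μ : Measure Ω}

lemma euclid_abs_le {dim : ℕ} (x : EuclideanSpace ℝ (Fin dim)) (i : Fin dim) : |x i| ≤ ‖x‖ := by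
  rw [EuclideanSpace.norm_eq]
  calc |x i| = Real.sqrt (|x i| ^ 2) := by rw [Real.sqrt_sq (abs_nonneg _)]
    _ ≤ Real.sqrt (∑ j, ‖x j‖ ^ 2) := by
        refine Real.sqrt_le_sqrt ?_
        refine Finset.single_le_sum (f := fun j => ‖x j‖ ^ 2) (fun j _ => sq_nonneg _)
          (Finset.mem_univ i)

end Aux

/-- Chow-type strong law for martingales: if the normalized conditional squared
increments are summable, then `d n⁻¹ • M n → 0` almost surely. -/
theorem stmt10 {Ω : Type*} {m : MeasurableSpace Ω} (μ : Measure Ω) [IsProbabilityMeasure μ]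
    (ℱ : Filtration ℕ m) (dim : ℕ)
    (M : ℕ → Ω → EuclideanSpace ℝ (Fin dim))
    (hM : Martingale M ℱ μ)
    (hM2 : ∀ n, MemLp (M n) 2 μ)
    (d : ℕ → ℝ) (hdpos : ∀ n, 0 < d n) (hdmono : Monotone d)
    (hdtop : Tendsto d atTop atTop)
    (hsum : ∀ᵐ ω ∂μ, Summable (fun n =>
      ((d (n + 1)) ^ 2)⁻¹ *
        (condExp (ℱ n) μ (fun ω' => ‖M (n + 1) ω' - M n ω'‖ ^ 2) ω))) :
    ∀ᵐ ω ∂μ, Tendsto (fun n => (d n)⁻¹ • M n ω) atTop (nhds 0) := by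
  classical
  -- coordinate processes
  have hcoord : ∀ i : Fin dim, ∀ᵐ ω ∂μ,
      Tendsto (fun n => (d n)⁻¹ * M n ω i) atTop (nhds 0) := by
    intro i
    set g : ℕ → Ω → ℝ := fun n ω => M n ω i with hg_def
    have hgmeas : ∀ n, StronglyMeasurable[ℱ n] (g n) := fun n =>
      (EuclideanSpace.proj (𝕜 := ℝ) i).continuous.comp_stronglyMeasurable
        (hM.stronglyMeasurable n)
    have hg2 : ∀ n, MemLp (g n) 2 μ := by
      intro n
      refine MemLp.of_le (hM2 n).norm ((hgmeas n).mono (ℱ.le n)).aestronglyMeasurable ?_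
      refine Eventually.of_forall fun ω => ?_
      rw [Real.norm_eq_abs, Real.norm_eq_abs, abs_of_nonneg (norm_nonneg _)]
      exact euclid_abs_le (M n ω) i
    have hgint : ∀ n, Integrable (g n) μ := fun n => (hg2 n).integrable one_le_two
    have hgmart : Martingale g ℱ μ := by
      refine martingale_of_setIntegral_eq_succ hgmeas hgint fun n s hs => ?_
      have h1 : ∫ ω in s, g n ω ∂μ = (EuclideanSpace.proj (𝕜 := ℝ) i) (∫ ω in s, M n ω ∂μ) :=
        ContinuousLinearMap.integral_comp_comm (EuclideanSpace.proj (𝕜 := ℝ) i)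
          ((hM.integrable n).restrict)
      have h2 : ∫ ω in s, g (n + 1) ω ∂μ
          = (EuclideanSpace.proj (𝕜 := ℝ) i) (∫ ω in s, M (n + 1) ω ∂μ) :=
        ContinuousLinearMap.integral_comp_comm (EuclideanSpace.proj (𝕜 := ℝ) i)
          ((hM.integrable (n + 1)).restrict)
      rw [h1, h2, hM.setIntegral_eq (Nat.le_succ n) hs]
    -- summability of coordinate conditional variances
    have hgsum : ∀ᵐ ω ∂μ, Summable (fun n => ((d (n + 1)) ^ 2)⁻¹ *
        (condExp (ℱ n) μ (fun ω' => (g (n + 1) ω' - g n ω') ^ 2) ω)) := by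
      have hXsq_int : ∀ n, Integrable (fun ω' => (g (n + 1) ω' - g n ω') ^ 2) μ :=
        fun n => ((hg2 (n + 1)).sub (hg2 n)).integrable_sq
      have hNsq_int : ∀ n, Integrable (fun ω' => ‖M (n + 1) ω' - M n ω'‖ ^ 2) μ :=
        fun n => ((hM2 (n + 1)).sub (hM2 n)).norm.integrable_sq
      have hle : ∀ n, condExp (ℱ n) μ (fun ω' => (g (n + 1) ω' - g n ω') ^ 2)
          ≤ᵐ[μ] condExp (ℱ n) μ (fun ω' => ‖M (n + 1) ω' - M n ω'‖ ^ 2) := by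
        intro n
        refine condExp_mono (hXsq_int n) (hNsq_int n) (Eventually.of_forall fun ω' => ?_)
        show (g (n + 1) ω' - g n ω') ^ 2 ≤ ‖M (n + 1) ω' - M n ω'‖ ^ 2
        have h1 : g (n + 1) ω' - g n ω' = (M (n + 1) ω' - M n ω') i := rfl
        rw [h1, ← sq_abs]
        refine pow_le_pow_left₀ (abs_nonneg _) (euclid_abs_le _ i) 2
      have hnn : ∀ n, 0 ≤ᵐ[μ] condExp (ℱ n) μ (fun ω' => (g (n + 1) ω' - g n ω') ^ 2) :=
        fun n => condExp_nonneg (Eventually.of_forall fun ω' => sq_nonneg _)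
      filter_upwards [hsum, ae_all_iff.2 hle, ae_all_iff.2 hnn] with ω hω hleω hnnω
      refine Summable.of_nonneg_of_le
        (fun n => mul_nonneg (inv_nonneg.2 (sq_nonneg _)) (hnnω n))
        (fun n => mul_le_mul_of_nonneg_left (hleω n) (inv_nonneg.2 (sq_nonneg _))) hω
    exact chow_real μ ℱ g hgmart hg2 d hdpos hdmono hdtop hgsum
  rw [← ae_all_iff] at hcoord
  filter_upwards [hcoord] with ω hω
  rw [tendsto_zero_iff_norm_tendsto_zero]
  have hF : Tendsto (fun n => ∑ i : Fin dim, ‖(d n)⁻¹ * M n ω i‖ ^ 2) atTop (nhds 0) := by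
    have : Tendsto (fun n => ∑ i : Fin dim, ‖(d n)⁻¹ * M n ω i‖ ^ 2) atTop
        (nhds (∑ i : Fin dim, 0)) := by
      refine tendsto_finset_sum _ fun i _ => ?_
      have h1 : Tendsto (fun n => ‖(d n)⁻¹ * M n ω i‖) atTop (nhds 0) := by
        rw [← norm_zero (E := ℝ)]
        exact (hω i).norm
      have := h1.pow 2
      simpa using this
    simpa using this
  have heq : ∀ n, ‖(d n)⁻¹ • M n ω‖ = Real.sqrt (∑ i : Fin dim, ‖(d n)⁻¹ * M n ω i‖ ^ 2) := by
    intro n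
    rw [EuclideanSpace.norm_eq]
    congr 1
  have : Tendsto (fun n => Real.sqrt (∑ i : Fin dim, ‖(d n)⁻¹ * M n ω i‖ ^ 2)) atTop
      (nhds (Real.sqrt 0)) := (Real.continuous_sqrt.tendsto 0).comp hF
  rw [Real.sqrt_zero] at this
  exact (tendsto_congr heq).2 this
end
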